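/- Let A = !![a₁,a₂,a₃; b₁,b₂,b₃; c₁,c₂,c₃] be a real 3×3 matrix with det A ≠ 0. Let (xᵢ,yᵢ,pᵢ,qᵢ) ∈ ℝ⁴ for i = 1,2,3,4 with hᵢ := c₁xᵢ+c₂yᵢ+c₃ ≠ 0, and let (x̃ᵢ,ỹᵢ,p̃ᵢ,q̃ᵢ) be the prolonged transform: (x̃ᵢ,ỹᵢ) := ((a₁xᵢ+a₂yᵢ+a₃)/hᵢ, (b₁xᵢ+b₂yᵢ+b₃)/hᵢ) and (p̃ᵢ,q̃ᵢ) the first two components of hᵢ·ℓᵢA⁻¹, where ℓᵢ := (pᵢ, qᵢ, −pᵢxᵢ−qᵢyᵢ). Then the quantity σ := δ₁₂₃δ₁₂₄δ₁₃₄δ₂₃₄ · Δ₁₂₃Δ₁₂₄Δ₁₃₄Δ₂₃₄ is an absolute invariant: σ̃, computed from the transformed data, equals σ. -/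

import Mathlib

open Matrix

/-- The gradient line `ℓ = (p, q, -p*x - q*y)` of the data `(x, y, p, q)`. -/
noncomputable def gradLine (x y p q : ℝ) : Fin 3 → ℝ := ![p, q, -(p * x) - q * y]

/-- Determinant of the 3×3 matrix with rows `v₁, v₂, v₃`. -/
noncomputable def det3 (v₁ v₂ v₃ : Fin 3 → ℝ) : ℝ := Matrix.det (Matrix.of ![v₁, v₂, v₃])

lemma detpts (a1 a2 a3 b1 b2 b3 c1 c2 c3 x1 y1 x2 y2 x3 y3 : ℝ)
    (h1 : (c1*x1+c2*y1+c3) ≠ 0) (h2 : (c1*x2+c2*y2+c3) ≠ 0) (h3 : (c1*x3+c2*y3+c3) ≠ 0) :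
    Matrix.det !![(a1*x1+a2*y1+a3)/(c1*x1+c2*y1+c3), (a1*x2+a2*y2+a3)/(c1*x2+c2*y2+c3), (a1*x3+a2*y3+a3)/(c1*x3+c2*y3+c3);
                  (b1*x1+b2*y1+b3)/(c1*x1+c2*y1+c3), (b1*x2+b2*y2+b3)/(c1*x2+c2*y2+c3), (b1*x3+b2*y3+b3)/(c1*x3+c2*y3+c3);
                  1, 1, 1]
      = Matrix.det !![a1,a2,a3;b1,b2,b3;c1,c2,c3] * Matrix.det !![x1,x2,x3;y1,y2,y3;1,1,1]
        / ((c1*x1+c2*y1+c3)*(c1*x2+c2*y2+c3)*(c1*x3+c2*y3+c3)) := by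
  have key : !![(a1*x1+a2*y1+a3)/(c1*x1+c2*y1+c3), (a1*x2+a2*y2+a3)/(c1*x2+c2*y2+c3), (a1*x3+a2*y3+a3)/(c1*x3+c2*y3+c3);
                  (b1*x1+b2*y1+b3)/(c1*x1+c2*y1+c3), (b1*x2+b2*y2+b3)/(c1*x2+c2*y2+c3), (b1*x3+b2*y3+b3)/(c1*x3+c2*y3+c3);
                  1, 1, 1]
      = !![a1,a2,a3;b1,b2,b3;c1,c2,c3] * !![x1,x2,x3;y1,y2,y3;1,1,1] *
        Matrix.diagonal ![(c1*x1+c2*y1+c3)⁻¹, (c1*x2+c2*y2+c3)⁻¹, (c1*x3+c2*y3+c3)⁻¹] := by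
    ext i j
    fin_cases i <;> fin_cases j <;>
      · simp only [Matrix.mul_apply, Fin.sum_univ_three, Matrix.diagonal, Matrix.of_apply,
          Matrix.cons_val', Matrix.cons_val_zero, Matrix.cons_val_one, Matrix.head_cons,
          Matrix.empty_val', Matrix.cons_val_fin_one, Matrix.cons_val_two, Matrix.tail_cons,
          div_eq_mul_inv]
        simp
        all_goals first | exact Or.inl (by ring1) | ring1 | field_simp
  rw [key, Matrix.det_mul, Matrix.det_mul, Matrix.det_diagonal, Fin.prod_univ_three]
  simp only [Matrix.cons_val_zero, Matrix.cons_val_one, Matrix.head_cons, Matrix.cons_val_two,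
    Matrix.tail_cons]
  field_simp



lemma det3_expand (v1 v2 v3 : Fin 3 → ℝ) :
    det3 v1 v2 v3 = v1 0 * v2 1 * v3 2 - v1 0 * v2 2 * v3 1 - v1 1 * v2 0 * v3 2
      + v1 1 * v2 2 * v3 0 + v1 2 * v2 0 * v3 1 - v1 2 * v2 1 * v3 0 := by
  simp [det3, Matrix.det_fin_three]

lemma det3_smul (s1 s2 s3 : ℝ) (v1 v2 v3 : Fin 3 → ℝ) :
    det3 (s1 • v1) (s2 • v2) (s3 • v3) = s1 * s2 * s3 * det3 v1 v2 v3 := by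
  simp only [det3_expand, Pi.smul_apply, smul_eq_mul]
  ring

lemma det3_vecMul (v1 v2 v3 : Fin 3 → ℝ) (M : Matrix (Fin 3) (Fin 3) ℝ) :
    det3 (Matrix.vecMul v1 M) (Matrix.vecMul v2 M) (Matrix.vecMul v3 M)
      = det3 v1 v2 v3 * Matrix.det M := by
  have h : Matrix.of ![Matrix.vecMul v1 M, Matrix.vecMul v2 M, Matrix.vecMul v3 M]
      = Matrix.of ![v1, v2, v3] * M := by
    ext i j
    fin_cases i <;> simp [Matrix.mul_apply, Matrix.vecMul, dotProduct]
  rw [det3, h, Matrix.det_mul, det3]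

lemma line_transform (a1 a2 a3 b1 b2 b3 c1 c2 c3 : ℝ)
    (hD : Matrix.det !![a1, a2, a3; b1, b2, b3; c1, c2, c3] ≠ 0)
    (x y p q xt yt pt qt : ℝ)
    (hh : (c1 * x + c2 * y + c3) ≠ 0)
    (hxt : xt = (a1 * x + a2 * y + a3) / (c1 * x + c2 * y + c3))
    (hyt : yt = (b1 * x + b2 * y + b3) / (c1 * x + c2 * y + c3))
    (hpt : pt = ((c1 * x + c2 * y + c3) • Matrix.vecMul (gradLine x y p q) (!![a1, a2, a3; b1, b2, b3; c1, c2, c3])⁻¹) 0)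
    (hqt : qt = ((c1 * x + c2 * y + c3) • Matrix.vecMul (gradLine x y p q) (!![a1, a2, a3; b1, b2, b3; c1, c2, c3])⁻¹) 1) :
    gradLine xt yt pt qt
      = (c1 * x + c2 * y + c3) • Matrix.vecMul (gradLine x y p q) (!![a1, a2, a3; b1, b2, b3; c1, c2, c3])⁻¹ := by
  set A : Matrix (Fin 3) (Fin 3) ℝ := !![a1, a2, a3; b1, b2, b3; c1, c2, c3] with hA
  set w : Fin 3 → ℝ := Matrix.vecMul (gradLine x y p q) A⁻¹ with hw
  have hv : A *ᵥ ![x, y, 1] = (c1 * x + c2 * y + c3) • ![xt, yt, 1] := by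
    funext i
    fin_cases i <;>
      simp [hA, Matrix.mulVec, dotProduct, Fin.sum_univ_three, hxt, hyt] <;>
      field_simp [show x * c1 + y * c2 + c3 ≠ 0 by rw [mul_comm x, mul_comm y]; exact hh]
  have hv2 : A⁻¹ *ᵥ (A *ᵥ ![x, y, 1]) = ![x, y, 1] := by
    rw [Matrix.mulVec_mulVec, Matrix.nonsing_inv_mul A (isUnit_iff_ne_zero.mpr hD), Matrix.one_mulVec]
  have hv3 : A⁻¹ *ᵥ ![xt, yt, 1] = (c1 * x + c2 * y + c3)⁻¹ • ![x, y, 1] := by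
    have : A⁻¹ *ᵥ ((c1 * x + c2 * y + c3) • ![xt, yt, 1]) = ![x, y, 1] := by
      rw [← hv, hv2]
    rw [Matrix.mulVec_smul] at this
    rw [← this, smul_smul, inv_mul_cancel₀ hh, one_smul]
  have key : w ⬝ᵥ ![xt, yt, 1] = 0 := by
    rw [hw, ← Matrix.dotProduct_mulVec, hv3]
    simp [dotProduct, Fin.sum_univ_three, gradLine]
    ring
  have hkey : w 0 * xt + w 1 * yt + w 2 = 0 := by
    have := key
    simpa [dotProduct, Fin.sum_univ_three] using this
  funext i
  fin_cases i
  · simpa [gradLine] using hpt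
  · simpa [gradLine] using hqt
  · show -(pt * xt) - qt * yt = ((c1 * x + c2 * y + c3) • w) 2
    have hp : pt = (c1 * x + c2 * y + c3) * w 0 := by simpa using hpt
    have hq : qt = (c1 * x + c2 * y + c3) * w 1 := by simpa using hqt
    simp only [Pi.smul_apply, smul_eq_mul]
    rw [hp, hq]
    linear_combination (-(c1 * x + c2 * y + c3)) * hkey


set_option maxHeartbeats 2000000 in
theorem sigma_is_absolute_invariant
    (a1 a2 a3 b1 b2 b3 c1 c2 c3 : ℝ)
    (hD : Matrix.det !![a1, a2, a3; b1, b2, b3; c1, c2, c3] ≠ 0)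
    (x1 y1 p1 q1 x2 y2 p2 q2 x3 y3 p3 q3 x4 y4 p4 q4 : ℝ)
    (hh1 : (c1 * x1 + c2 * y1 + c3) ≠ 0)
    (hh2 : (c1 * x2 + c2 * y2 + c3) ≠ 0)
    (hh3 : (c1 * x3 + c2 * y3 + c3) ≠ 0)
    (hh4 : (c1 * x4 + c2 * y4 + c3) ≠ 0)
    (xt1 yt1 pt1 qt1 xt2 yt2 pt2 qt2 xt3 yt3 pt3 qt3 xt4 yt4 pt4 qt4 : ℝ)
    (hxt1 : xt1 = (a1 * x1 + a2 * y1 + a3) / (c1 * x1 + c2 * y1 + c3))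
    (hyt1 : yt1 = (b1 * x1 + b2 * y1 + b3) / (c1 * x1 + c2 * y1 + c3))
    (hpt1 : pt1 = ((c1 * x1 + c2 * y1 + c3) • Matrix.vecMul (gradLine x1 y1 p1 q1) (!![a1, a2, a3; b1, b2, b3; c1, c2, c3])⁻¹) 0)
    (hqt1 : qt1 = ((c1 * x1 + c2 * y1 + c3) • Matrix.vecMul (gradLine x1 y1 p1 q1) (!![a1, a2, a3; b1, b2, b3; c1, c2, c3])⁻¹) 1)
    (hxt2 : xt2 = (a1 * x2 + a2 * y2 + a3) / (c1 * x2 + c2 * y2 + c3))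
    (hyt2 : yt2 = (b1 * x2 + b2 * y2 + b3) / (c1 * x2 + c2 * y2 + c3))
    (hpt2 : pt2 = ((c1 * x2 + c2 * y2 + c3) • Matrix.vecMul (gradLine x2 y2 p2 q2) (!![a1, a2, a3; b1, b2, b3; c1, c2, c3])⁻¹) 0)
    (hqt2 : qt2 = ((c1 * x2 + c2 * y2 + c3) • Matrix.vecMul (gradLine x2 y2 p2 q2) (!![a1, a2, a3; b1, b2, b3; c1, c2, c3])⁻¹) 1)
    (hxt3 : xt3 = (a1 * x3 + a2 * y3 + a3) / (c1 * x3 + c2 * y3 + c3))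
    (hyt3 : yt3 = (b1 * x3 + b2 * y3 + b3) / (c1 * x3 + c2 * y3 + c3))
    (hpt3 : pt3 = ((c1 * x3 + c2 * y3 + c3) • Matrix.vecMul (gradLine x3 y3 p3 q3) (!![a1, a2, a3; b1, b2, b3; c1, c2, c3])⁻¹) 0)
    (hqt3 : qt3 = ((c1 * x3 + c2 * y3 + c3) • Matrix.vecMul (gradLine x3 y3 p3 q3) (!![a1, a2, a3; b1, b2, b3; c1, c2, c3])⁻¹) 1)
    (hxt4 : xt4 = (a1 * x4 + a2 * y4 + a3) / (c1 * x4 + c2 * y4 + c3))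
    (hyt4 : yt4 = (b1 * x4 + b2 * y4 + b3) / (c1 * x4 + c2 * y4 + c3))
    (hpt4 : pt4 = ((c1 * x4 + c2 * y4 + c3) • Matrix.vecMul (gradLine x4 y4 p4 q4) (!![a1, a2, a3; b1, b2, b3; c1, c2, c3])⁻¹) 0)
    (hqt4 : qt4 = ((c1 * x4 + c2 * y4 + c3) • Matrix.vecMul (gradLine x4 y4 p4 q4) (!![a1, a2, a3; b1, b2, b3; c1, c2, c3])⁻¹) 1) :
    Matrix.det !![xt1, xt2, xt3; yt1, yt2, yt3; 1, 1, 1] * Matrix.det !![xt1, xt2, xt4; yt1, yt2, yt4; 1, 1, 1] * Matrix.det !![xt1, xt3, xt4; yt1, yt3, yt4; 1, 1, 1] * Matrix.det !![xt2, xt3, xt4; yt2, yt3, yt4; 1, 1, 1] * (det3 (gradLine xt1 yt1 pt1 qt1) (gradLine xt2 yt2 pt2 qt2) (gradLine xt3 yt3 pt3 qt3)) * (det3 (gradLine xt1 yt1 pt1 qt1) (gradLine xt2 yt2 pt2 qt2) (gradLine xt4 yt4 pt4 qt4)) * (det3 (gradLine xt1 yt1 pt1 qt1) (gradLine xt3 yt3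 pt3 qt3) (gradLine xt4 yt4 pt4 qt4)) * (det3 (gradLine xt2 yt2 pt2 qt2) (gradLine xt3 yt3 pt3 qt3) (gradLine xt4 yt4 pt4 qt4))
      = Matrix.det !![x1, x2, x3; y1, y2, y3; 1, 1, 1] * Matrix.det !![x1, x2, x4; y1, y2, y4; 1, 1, 1] * Matrix.det !![x1, x3, x4; y1, y3, y4; 1, 1, 1] * Matrix.det !![x2, x3, x4; y2, y3, y4; 1, 1, 1] * (det3 (gradLine x1 y1 p1 q1) (gradLine x2 y2 p2 q2) (gradLine x3 y3 p3 q3)) * (det3 (gradLine x1 y1 p1 q1) (gradLine x2 y2 p2 q2) (gradLine x4 y4 p4 q4)) * (det3 (gradLine x1 y1 p1 q1) (gradLine x3 y3 p3 q3) (gradLine x4 y4 p4 q4)) * (det3 (gradLine x2 y2 p2 q2) (gradLine x3 y3 p3 q3) (gradLine x4 y4 p4 q4)) := by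
  have hL1 := line_transform a1 a2 a3 b1 b2 b3 c1 c2 c3 hD x1 y1 p1 q1 xt1 yt1 pt1 qt1 hh1 hxt1 hyt1 hpt1 hqt1
  have hL2 := line_transform a1 a2 a3 b1 b2 b3 c1 c2 c3 hD x2 y2 p2 q2 xt2 yt2 pt2 qt2 hh2 hxt2 hyt2 hpt2 hqt2
  have hL3 := line_transform a1 a2 a3 b1 b2 b3 c1 c2 c3 hD x3 y3 p3 q3 xt3 yt3 pt3 qt3 hh3 hxt3 hyt3 hpt3 hqt3
  have hL4 := line_transform a1 a2 a3 b1 b2 b3 c1 c2 c3 hD x4 y4 p4 q4 xt4 yt4 pt4 qt4 hh4 hxt4 hyt4 hpt4 hqt4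
  rw [hL1, hL2, hL3, hL4, hxt1, hyt1, hxt2, hyt2, hxt3, hyt3, hxt4, hyt4]
  rw [detpts a1 a2 a3 b1 b2 b3 c1 c2 c3 x1 y1 x2 y2 x3 y3 hh1 hh2 hh3,
      detpts a1 a2 a3 b1 b2 b3 c1 c2 c3 x1 y1 x2 y2 x4 y4 hh1 hh2 hh4,
      detpts a1 a2 a3 b1 b2 b3 c1 c2 c3 x1 y1 x3 y3 x4 y4 hh1 hh3 hh4,
      detpts a1 a2 a3 b1 b2 b3 c1 c2 c3 x2 y2 x3 y3 x4 y4 hh2 hh3 hh4,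
      det3_smul, det3_smul, det3_smul, det3_smul,
      det3_vecMul, det3_vecMul, det3_vecMul, det3_vecMul,
      Matrix.det_nonsing_inv, Ring.inverse_eq_inv']
  set d := Matrix.det !![a1, a2, a3; b1, b2, b3; c1, c2, c3] with hd
  set e1 := Matrix.det !![x1, x2, x3; y1, y2, y3; 1, 1, 1]
  set e2 := Matrix.det !![x1, x2, x4; y1, y2, y4; 1, 1, 1]
  set e3 := Matrix.det !![x1, x3, x4; y1, y3, y4; 1, 1, 1]
  set e4 := Matrix.det !![x2, x3, x4; y2, y3, y4; 1, 1, 1]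
  set f1 := det3 (gradLine x1 y1 p1 q1) (gradLine x2 y2 p2 q2) (gradLine x3 y3 p3 q3)
  set f2 := det3 (gradLine x1 y1 p1 q1) (gradLine x2 y2 p2 q2) (gradLine x4 y4 p4 q4)
  set f3 := det3 (gradLine x1 y1 p1 q1) (gradLine x3 y3 p3 q3) (gradLine x4 y4 p4 q4)
  set f4 := det3 (gradLine x2 y2 p2 q2) (gradLine x3 y3 p3 q3) (gradLine x4 y4 p4 q4)
  set g1 := c1 * x1 + c2 * y1 + c3
  set g2 := c1 * x2 + c2 * y2 + c3
  set g3 := c1 * x3 + c2 * y3 + c3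
  set g4 := c1 * x4 + c2 * y4 + c3
  clear_value d e1 e2 e3 e4 f1 f2 f3 f4 g1 g2 g3 g4
  field_simp
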